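/- The ℚ-vector space Z_q ⊆ ℚ⟦q⟧, spanned by 1 together with all generic multiple q-zeta values ζ_q(s₁,…,s_l;R₁,…,R_l) with l ≥ 1, s₁ ≥ 1, s₂,…,s_l ≥ 0, R₁ ∈ tℚ[t], R₂,…,R_l ∈ ℚ[t] and deg(R_j) ≤ s_j for all j, is closed under the multiplication of ℚ⟦q⟧; i.e. Z_q is a ℚ-subalgebra of ℚ⟦q⟧. -/

import Mathlib

/-!
STATEMENT 17: the `ℚ`-vector space `Z_q ⊆ ℚ⟦q⟧` spanned by `1` and the generic
multiple q-zeta values `ζ_q(s₁,…,s_l;R₁,…,R_l)` (with `l ≥ 1`, `s₁ ≥ 1`,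
`s₂,…,s_l ≥ 0`, `R₁ ∈ tℚ[t]`, `R₂,…,R_l ∈ ℚ[t]`, `deg(R_j) ≤ s_j`) is closed under
multiplication, i.e. it is a `ℚ`-subalgebra of `ℚ⟦q⟧`.

`ζ_q(s₁,…,s_l;R₁,…,R_l) = ∑_{n₁>⋯>n_l>0} ∏ R_i(q^{n_i})/(1-q^{n_i})^{s_i} ∈ ℚ⟦q⟧`.
Since `R₁` has no constant term, each summand is divisible by `q^{n₁}`, so the `N`-th
coefficient only receives contributions from tuples with `n₁ ≤ N` (and hence all
`n_i ∈ [1, N]`); the series is defined coefficientwise through this finite truncation.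
-/

open PowerSeries

/-- The single factor `R(q^n)/(1-q^n)^s ∈ ℚ⟦q⟧`. -/
noncomputable def qterm (s : ℕ) (R : Polynomial ℚ) (n : ℕ) : PowerSeries ℚ :=
  Polynomial.eval₂ ((PowerSeries.C : ℚ →+* PowerSeries ℚ)) (PowerSeries.X ^ n) R *
    ((1 - PowerSeries.X ^ n)⁻¹) ^ s

/-- The generic multiple q-zeta value
`ζ_q(s₁,…,s_l;R₁,…,R_l) = ∑_{n₁>⋯>n_l>0} ∏ R_i(q^{n_i})/(1-q^{n_i})^{s_i} ∈ ℚ⟦q⟧`,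
the (outer) index `0 : Fin l` corresponding to `n₁ > n₂ > ⋯`. -/
noncomputable def zqGen (l : ℕ) (s : Fin l → ℕ) (R : Fin l → Polynomial ℚ) :
    PowerSeries ℚ :=
  PowerSeries.mk fun N =>
    PowerSeries.coeff N
      (∑ n ∈ (Fintype.piFinset fun _ : Fin l => Finset.Icc 1 N).filter
          (fun n => ∀ i j : Fin l, i < j → n j < n i),
        ∏ i : Fin l, qterm (s i) (R i) (n i))

/-- The space `Z_q`: the `ℚ`-span of `1` together with all generic multiple q-zeta
values `ζ_q(s₁,…,s_l;R₁,…,R_l)` with `l ≥ 1`, `s₁ ≥ 1`, `R₁ ∈ tℚ[t]` and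
`deg(R_j) ≤ s_j` for all `j`. -/
noncomputable def Zq : Submodule ℚ (PowerSeries ℚ) :=
  Submodule.span ℚ
    {f : PowerSeries ℚ |
      f = 1 ∨
      ∃ (l : ℕ) (s : Fin (l + 1) → ℕ) (R : Fin (l + 1) → Polynomial ℚ),
        1 ≤ s 0 ∧ (R 0).coeff 0 = 0 ∧ (∀ j, (R j).natDegree ≤ s j) ∧
        f = zqGen (l + 1) s R}



/-- truncated multiple sum on a list of data -/
noncomputable def Tl : List (ℕ × Polynomial ℚ) → ℕ → PowerSeries ℚ
  | [], _ => 1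
  | p :: L, N => ∑ a ∈ Finset.Icc 1 N, qterm p.1 p.2 a * Tl L (a - 1)

/-- quasi-shuffle of data lists -/
noncomputable def qmul : List (ℕ × Polynomial ℚ) → List (ℕ × Polynomial ℚ) → List (List (ℕ × Polynomial ℚ))
  | [], ys => [ys]
  | xs, [] => [xs]
  | x :: xs, y :: ys =>
      ((qmul xs (y :: ys)).map (x :: ·)) ++ ((qmul (x :: xs) ys).map (y :: ·))
        ++ ((qmul xs ys).map ((x.1 + y.1, x.2 * y.2) :: ·))
  termination_by xs ys => xs.length + ys.length

lemma qterm_mul (s s' : ℕ) (R R' : Polynomial ℚ) (a : ℕ) :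
    qterm s R a * qterm s' R' a = qterm (s + s') (R * R') a := by
  simp only [qterm, Polynomial.eval₂_mul, pow_add]; ring

lemma X_pow_dvd_qterm_mul (s : ℕ) (R : Polynomial ℚ) (hR : R.coeff 0 = 0) (a : ℕ)
    (g : PowerSeries ℚ) : (PowerSeries.X : PowerSeries ℚ) ^ a ∣ qterm s R a * g := by
  have h1 : (Polynomial.X : Polynomial ℚ) ∣ R := Polynomial.X_dvd_iff.mpr hR
  have h2 : (PowerSeries.X : PowerSeries ℚ) ^ a ∣
      Polynomial.eval₂ ((PowerSeries.C : ℚ →+* PowerSeries ℚ)) (PowerSeries.X ^ a) R := by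
    have := (Polynomial.eval₂RingHom ((PowerSeries.C : ℚ →+* PowerSeries ℚ))
      ((PowerSeries.X : PowerSeries ℚ) ^ a)).map_dvd h1
    simpa using this
  exact Dvd.dvd.mul_right (Dvd.dvd.mul_right h2 _) g

lemma coeff_qterm_mul_eq_zero (s : ℕ) (R : Polynomial ℚ) (hR : R.coeff 0 = 0) {a N : ℕ}
    (h : N < a) (g : PowerSeries ℚ) : PowerSeries.coeff N (qterm s R a * g) = 0 :=
  (PowerSeries.X_pow_dvd_iff.mp (X_pow_dvd_qterm_mul s R hR a g)) N h

/-- splitting a product of two sums over `Icc 1 N` into `b<a`, `a<b`, `a=b` parts -/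
lemma sum_mul_split {M : Type*} [CommRing M] (f g : ℕ → M) (N : ℕ) :
    (∑ a ∈ Finset.Icc 1 N, f a) * (∑ b ∈ Finset.Icc 1 N, g b) =
      (∑ a ∈ Finset.Icc 1 N, f a * (∑ b ∈ Finset.Icc 1 (a - 1), g b)) +
      (∑ b ∈ Finset.Icc 1 N, (∑ a ∈ Finset.Icc 1 (b - 1), f a) * g b) +
      (∑ a ∈ Finset.Icc 1 N, f a * g a) := by
  induction N with
  | zero => simp
  | succ N ih =>
      have hins : Finset.Icc 1 (N + 1) = insert (N + 1) (Finset.Icc 1 N) := by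
        ext x; simp; omega
      have hnot : (N + 1) ∉ Finset.Icc 1 N := by simp
      have h1 : (N + 1 : ℕ) - 1 = N := by omega
      simp only [hins, Finset.sum_insert hnot, h1]
      linear_combination ih

lemma list_sum_map_eq {α M : Type*} [AddCommMonoid M] (l : List α) (f : α → M) :
    (l.map f).sum = ∑ i : Fin l.length, f (l.get i) := by
  conv_lhs => rw [← List.ofFn_get l]
  rw [List.map_ofFn, List.sum_ofFn]
  simp

lemma coeff_Tl_stable (p : ℕ × Polynomial ℚ) (L : List (ℕ × Polynomial ℚ))
    (hR : p.2.coeff 0 = 0) {N M : ℕ} (h : N ≤ M) :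
    PowerSeries.coeff N (Tl (p :: L) M) = PowerSeries.coeff N (Tl (p :: L) N) := by
  have e : ∀ K, PowerSeries.coeff N (Tl (p :: L) K) =
      ∑ a ∈ Finset.Icc 1 K, PowerSeries.coeff N (qterm p.1 p.2 a * Tl L (a - 1)) := by
    intro K
    show PowerSeries.coeff N (∑ a ∈ Finset.Icc 1 K, qterm p.1 p.2 a * Tl L (a - 1)) = _
    rw [map_sum]
  rw [e, e]
  refine (Finset.sum_subset (Finset.Icc_subset_Icc_right h) ?_).symm
  intro a ha ha'
  simp only [Finset.mem_Icc] at ha ha'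
  exact coeff_qterm_mul_eq_zero p.1 p.2 hR (by omega) _

/-- the `Fin`-indexed truncated sum, matching `zqGen`. -/
noncomputable def Tf (l : ℕ) (s : Fin l → ℕ) (R : Fin l → Polynomial ℚ) (N : ℕ) :
    PowerSeries ℚ :=
  ∑ n ∈ (Fintype.piFinset fun _ : Fin l => Finset.Icc 1 N).filter
      (fun n => ∀ i j : Fin l, i < j → n j < n i),
    ∏ i : Fin l, qterm (s i) (R i) (n i)

lemma zqGen_eq (l : ℕ) (s : Fin l → ℕ) (R : Fin l → Polynomial ℚ) :
    zqGen l s R = PowerSeries.mk fun N => PowerSeries.coeff N (Tf l s R N) := rfl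

lemma Tf_succ (l : ℕ) (s : Fin (l + 1) → ℕ) (R : Fin (l + 1) → Polynomial ℚ) (N : ℕ) :
    Tf (l + 1) s R N = ∑ a ∈ Finset.Icc 1 N,
      qterm (s 0) (R 0) a * Tf l (fun i => s i.succ) (fun i => R i.succ) (a - 1) := by
  unfold Tf
  simp only [Finset.mul_sum]
  rw [Finset.sum_sigma' (Finset.Icc 1 N) (fun a => (Fintype.piFinset fun _ : Fin l => Finset.Icc 1 (a - 1)).filter (fun n => ∀ i j : Fin l, i < j → n j < n i)) (fun a m => qterm (s 0) (R 0) a * ∏ i : Fin l, qterm (s i.succ) (R i.succ) (m i))]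
  refine Finset.sum_nbij' (fun n => ⟨n 0, Fin.tail n⟩) (fun x => Fin.cons x.1 x.2)
    ?_ ?_ ?_ ?_ ?_
  · intro n hn
    simp only [Finset.mem_filter, Fintype.mem_piFinset, Finset.mem_Icc] at hn
    obtain ⟨h1, h2⟩ := hn
    simp only [Finset.mem_sigma, Finset.mem_filter, Fintype.mem_piFinset, Finset.mem_Icc,
      Finset.mem_Icc]
    refine ⟨h1 0, ⟨fun i => ?_, fun i j hij => ?_⟩⟩
    · have := h2 0 i.succ (Fin.succ_pos i)
      have := (h1 i.succ).1
      constructor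
      · exact (h1 i.succ).1
      · show n i.succ ≤ n 0 - 1
        omega
    · exact h2 i.succ j.succ (Fin.succ_lt_succ_iff.mpr hij)
  · intro x hx
    simp only [Finset.mem_sigma, Finset.mem_filter, Fintype.mem_piFinset, Finset.mem_Icc] at hx
    obtain ⟨hx1, hx2, hx3⟩ := hx
    simp only [Finset.mem_filter, Fintype.mem_piFinset, Finset.mem_Icc]
    constructor
    · intro i
      refine Fin.cases ?_ (fun i => ?_) i
      · simpa using hx1
      · have := hx2 i
        simp only [Fin.cons_succ]
        omega
    · intro i j hij
      refine Fin.cases (fun j hij => ?_) (fun i j hij => ?_) i j hij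
      · refine Fin.cases (fun h => absurd h (lt_irrefl _)) (fun j _ => ?_) j hij
        have := hx2 j
        simp only [Fin.cons_succ, Fin.cons_zero]
        omega
      · refine Fin.cases (fun h => absurd h (Fin.not_lt_zero _)) (fun j hij => ?_) j hij
        simp only [Fin.cons_succ]
        exact hx3 i j (Fin.succ_lt_succ_iff.mp hij)
  · intro n _; exact Fin.cons_self_tail n
  · intro x _; simp
  · intro n hn
    rw [Fin.prod_univ_succ]
    rfl

lemma Tf_eq_Tl (l : ℕ) (s : Fin l → ℕ) (R : Fin l → Polynomial ℚ) (N : ℕ) :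
    Tf l s R N = Tl (List.ofFn fun i => (s i, R i)) N := by
  induction l generalizing N with
  | zero =>
      unfold Tf
      simp [Tl]
  | succ l ih =>
      rw [Tf_succ, List.ofFn_succ]
      show _ = ∑ a ∈ Finset.Icc 1 N, _
      refine Finset.sum_congr rfl fun a _ => ?_
      rw [ih]

lemma Tl_cons (p : ℕ × Polynomial ℚ) (L : List (ℕ × Polynomial ℚ)) (N : ℕ) :
    Tl (p :: L) N = ∑ a ∈ Finset.Icc 1 N, qterm p.1 p.2 a * Tl L (a - 1) := rfl

/-- exchange a `Finset` sum with a list sum -/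
lemma step_lemma (q : ℕ → PowerSeries ℚ) (ls : List (List (ℕ × Polynomial ℚ))) (N : ℕ) :
    ∑ a ∈ Finset.Icc 1 N, q a * ((ls.map (fun L => Tl L (a - 1))).sum) =
      (ls.map (fun L => ∑ a ∈ Finset.Icc 1 N, q a * Tl L (a - 1))).sum := by
  have h : ∀ a, q a * ((ls.map (fun L => Tl L (a - 1))).sum) =
      ∑ i : Fin ls.length, q a * Tl (ls.get i) (a - 1) := fun a => by
    rw [list_sum_map_eq, Finset.mul_sum]
  rw [Finset.sum_congr rfl fun a _ => h a, Finset.sum_comm, list_sum_map_eq]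

theorem Tl_mul (xs ys : List (ℕ × Polynomial ℚ)) (N : ℕ) :
    Tl xs N * Tl ys N = ((qmul xs ys).map (fun L => Tl L N)).sum := by
  induction xs, ys using qmul.induct generalizing N with
  | case1 ys => rw [qmul]; simp [Tl]
  | case2 xs h =>
      cases xs with
      | nil => exact absurd rfl h
      | cons x xs => rw [qmul]
                     · simp [Tl]
                     · exact h
  | case3 x xs y ys ih1 ih2 ih3 =>
      rw [qmul, Tl_cons, Tl_cons,
        sum_mul_split (fun a => qterm x.1 x.2 a * Tl xs (a - 1))
          (fun b => qterm y.1 y.2 b * Tl ys (b - 1)) N,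
        List.map_append, List.map_append, List.sum_append, List.sum_append,
        List.map_map, List.map_map, List.map_map]
      congr 1
      · congr 1
        · -- b < a part
          calc ∑ a ∈ Finset.Icc 1 N, (qterm x.1 x.2 a * Tl xs (a - 1)) *
                  (∑ b ∈ Finset.Icc 1 (a - 1), qterm y.1 y.2 b * Tl ys (b - 1))
              = ∑ a ∈ Finset.Icc 1 N, qterm x.1 x.2 a *
                  (((qmul xs (y :: ys)).map (fun L => Tl L (a - 1))).sum) := by
                refine Finset.sum_congr rfl fun a _ => ?_
                rw [mul_assoc, ← Tl_cons, ih1]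
            _ = ((qmul xs (y :: ys)).map
                  (fun L => ∑ a ∈ Finset.Icc 1 N, qterm x.1 x.2 a * Tl L (a - 1))).sum :=
                step_lemma _ _ _
            _ = ((qmul xs (y :: ys)).map ((fun L => Tl L N) ∘ (x :: ·))).sum := by
                refine congrArg List.sum (List.map_congr_left fun L _ => ?_)
                simp [Function.comp, Tl_cons]
        · -- a < b part
          calc ∑ b ∈ Finset.Icc 1 N,
                  (∑ a ∈ Finset.Icc 1 (b - 1), qterm x.1 x.2 a * Tl xs (a - 1)) *
                  (qterm y.1 y.2 b * Tl ys (b - 1))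
              = ∑ b ∈ Finset.Icc 1 N, qterm y.1 y.2 b *
                  (((qmul (x :: xs) ys).map (fun L => Tl L (b - 1))).sum) := by
                refine Finset.sum_congr rfl fun b _ => ?_
                rw [← Tl_cons, ← ih2]
                ring
            _ = ((qmul (x :: xs) ys).map
                  (fun L => ∑ b ∈ Finset.Icc 1 N, qterm y.1 y.2 b * Tl L (b - 1))).sum :=
                step_lemma _ _ _
            _ = ((qmul (x :: xs) ys).map ((fun L => Tl L N) ∘ (y :: ·))).sum := by
                refine congrArg List.sum (List.map_congr_left fun L _ => ?_)
                simp [Function.comp, Tl_cons]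
      · -- a = b part
        calc ∑ a ∈ Finset.Icc 1 N,
                (qterm x.1 x.2 a * Tl xs (a - 1)) * (qterm y.1 y.2 a * Tl ys (a - 1))
            = ∑ a ∈ Finset.Icc 1 N, qterm (x.1 + y.1) (x.2 * y.2) a *
                (((qmul xs ys).map (fun L => Tl L (a - 1))).sum) := by
              refine Finset.sum_congr rfl fun a _ => ?_
              rw [← ih3, ← qterm_mul]
              ring
          _ = ((qmul xs ys).map
                (fun L => ∑ a ∈ Finset.Icc 1 N, qterm (x.1 + y.1) (x.2 * y.2) a * Tl L (a - 1))).sum :=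
              step_lemma _ _ _
          _ = ((qmul xs ys).map ((fun L => Tl L N) ∘ ((x.1 + y.1, x.2 * y.2) :: ·))).sum := by
              refine congrArg List.sum (List.map_congr_left fun L _ => ?_)
              simp [Function.comp, Tl_cons]

noncomputable def zqL (L : List (ℕ × Polynomial ℚ)) : PowerSeries ℚ :=
  PowerSeries.mk fun N => PowerSeries.coeff N (Tl L N)

lemma zqGen_eq_zqL (l : ℕ) (s : Fin l → ℕ) (R : Fin l → Polynomial ℚ) :
    zqGen l s R = zqL (List.ofFn fun i => (s i, R i)) := by
  rw [zqGen_eq, zqL]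
  exact congrArg PowerSeries.mk (funext fun N => by rw [Tf_eq_Tl])

lemma zqL_eq_zqGen (L : List (ℕ × Polynomial ℚ)) :
    zqL L = zqGen L.length (fun i => (L.get i).1) (fun i => (L.get i).2) := by
  rw [zqGen_eq_zqL]
  congr 1
  have : (fun i : Fin L.length => ((L.get i).1, (L.get i).2)) = L.get := by
    funext i; exact Prod.mk.eta
  rw [this, List.ofFn_get]

lemma zqL_mul (px py : ℕ × Polynomial ℚ) (pxs pys : List (ℕ × Polynomial ℚ))
    (hx : px.2.coeff 0 = 0) (hy : py.2.coeff 0 = 0) :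
    zqL (px :: pxs) * zqL (py :: pys) = ((qmul (px :: pxs) (py :: pys)).map zqL).sum := by
  ext N
  rw [PowerSeries.coeff_mul]
  have e1 : ∀ p ∈ Finset.HasAntidiagonal.antidiagonal N,
      PowerSeries.coeff p.1 (zqL (px :: pxs)) * PowerSeries.coeff p.2 (zqL (py :: pys)) =
      PowerSeries.coeff p.1 (Tl (px :: pxs) N) * PowerSeries.coeff p.2 (Tl (py :: pys) N) := by
    intro p hp
    rw [Finset.HasAntidiagonal.mem_antidiagonal] at hp
    rw [zqL, zqL, PowerSeries.coeff_mk, PowerSeries.coeff_mk,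
      (coeff_Tl_stable px pxs hx (M := N) (by omega)).symm,
      (coeff_Tl_stable py pys hy (M := N) (by omega)).symm]
  rw [Finset.sum_congr rfl e1, ← PowerSeries.coeff_mul, Tl_mul, map_list_sum, map_list_sum,
    List.map_map, List.map_map]
  refine congrArg List.sum (List.map_congr_left fun L _ => ?_)
  simp [Function.comp, zqL]

lemma qmul_shape (x y : ℕ × Polynomial ℚ) (xs ys : List (ℕ × Polynomial ℚ)) :
    ∀ L ∈ qmul (x :: xs) (y :: ys), ∃ p L', L = p :: L' ∧
      (p = x ∨ p = y ∨ p = (x.1 + y.1, x.2 * y.2)) := by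
  intro L hL
  rw [qmul] at hL
  simp only [List.mem_append, List.mem_map] at hL
  rcases hL with (⟨L', _, rfl⟩ | ⟨L', _, rfl⟩) | ⟨L', _, rfl⟩
  · exact ⟨x, L', rfl, Or.inl rfl⟩
  · exact ⟨y, L', rfl, Or.inr (Or.inl rfl)⟩
  · exact ⟨_, L', rfl, Or.inr (Or.inr rfl)⟩

lemma qmul_forall (P : ℕ × Polynomial ℚ → Prop)
    (hP : ∀ p q, P p → P q → P (p.1 + q.1, p.2 * q.2)) :
    ∀ (xs ys : List (ℕ × Polynomial ℚ)), (∀ p ∈ xs, P p) → (∀ p ∈ ys, P p) →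
      ∀ L ∈ qmul xs ys, ∀ p ∈ L, P p := by
  intro xs ys
  induction xs, ys using qmul.induct with
  | case1 ys =>
      intro _ h2 L hL
      rw [qmul] at hL
      simp at hL
      subst hL
      exact h2
  | case2 xs h =>
      cases xs with
      | nil => exact absurd rfl h
      | cons x xs =>
          intro h1 _ L hL
          rw [qmul] at hL
          · simp at hL
            subst hL
            exact h1
          · exact h
  | case3 x xs y ys ih1 ih2 ih3 =>
      intro h1 h2 L hL
      rw [qmul] at hL
      simp only [List.mem_append, List.mem_map] at hL
      have hx : P x := h1 x (by simp)
      have hy : P y := h2 y (by simp)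
      have h1' : ∀ p ∈ xs, P p := fun p hp => h1 p (by simp [hp])
      have h2' : ∀ p ∈ ys, P p := fun p hp => h2 p (by simp [hp])
      rcases hL with (⟨L', hL', rfl⟩ | ⟨L', hL', rfl⟩) | ⟨L', hL', rfl⟩
      · intro p hp
        rcases List.mem_cons.mp hp with rfl | hp
        · exact hx
        · exact ih1 h1' h2 L' hL' p hp
      · intro p hp
        rcases List.mem_cons.mp hp with rfl | hp
        · exact hy
        · exact ih2 h1 h2' L' hL' p hp
      · intro p hp
        rcases List.mem_cons.mp hp with rfl | hp
        · exact hP x y hx hy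
        · exact ih3 h1' h2' L' hL' p hp

def ZqSet : Set (PowerSeries ℚ) :=
  {f : PowerSeries ℚ |
    f = 1 ∨
    ∃ (l : ℕ) (s : Fin (l + 1) → ℕ) (R : Fin (l + 1) → Polynomial ℚ),
      1 ≤ s 0 ∧ (R 0).coeff 0 = 0 ∧ (∀ j, (R j).natDegree ≤ s j) ∧
      f = zqGen (l + 1) s R}

lemma Zq_eq_span : Zq = Submodule.span ℚ ZqSet := rfl

lemma key_mul : ∀ f ∈ ZqSet, ∀ g ∈ ZqSet, f * g ∈ Zq := by
  rintro f (rfl | ⟨l, s, R, hs1, hR0, hdeg, rfl⟩) g hg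
  · rw [one_mul]
    exact Submodule.subset_span hg
  rcases hg with rfl | ⟨l', s', R', hs1', hR0', hdeg', rfl⟩
  · rw [mul_one]
    exact Submodule.subset_span (Or.inr ⟨l, s, R, hs1, hR0, hdeg, rfl⟩)
  -- both are genuine generators
  have hfx : zqGen (l + 1) s R =
      zqL ((s 0, R 0) :: List.ofFn fun i : Fin l => (s i.succ, R i.succ)) := by
    rw [zqGen_eq_zqL, List.ofFn_succ]
  have hfy : zqGen (l' + 1) s' R' =
      zqL ((s' 0, R' 0) :: List.ofFn fun i : Fin l' => (s' i.succ, R' i.succ)) := by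
    rw [zqGen_eq_zqL, List.ofFn_succ]
  set Lx : List (ℕ × Polynomial ℚ) :=
    (s 0, R 0) :: List.ofFn fun i : Fin l => (s i.succ, R i.succ) with hLx
  set Ly : List (ℕ × Polynomial ℚ) :=
    (s' 0, R' 0) :: List.ofFn fun i : Fin l' => (s' i.succ, R' i.succ) with hLy
  rw [hfx, hfy, zqL_mul _ _ _ _ hR0 hR0']
  -- the degree condition propagates
  have hdegLx : ∀ p ∈ Lx, p.2.natDegree ≤ p.1 := by
    intro p hp
    rw [hLx] at hp
    rcases List.mem_cons.mp hp with rfl | hp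
    · exact hdeg 0
    · rcases List.mem_ofFn.mp hp with ⟨i, rfl⟩
      exact hdeg i.succ
  have hdegLy : ∀ p ∈ Ly, p.2.natDegree ≤ p.1 := by
    intro p hp
    rw [hLy] at hp
    rcases List.mem_cons.mp hp with rfl | hp
    · exact hdeg' 0
    · rcases List.mem_ofFn.mp hp with ⟨i, rfl⟩
      exact hdeg' i.succ
  have hPmul : ∀ p q : ℕ × Polynomial ℚ, p.2.natDegree ≤ p.1 → q.2.natDegree ≤ q.1 →
      (p.2 * q.2).natDegree ≤ p.1 + q.1 := fun p q h1 h2 =>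
    le_trans (Polynomial.natDegree_mul_le) (add_le_add h1 h2)
  refine list_sum_mem ?_
  intro w hw
  rcases List.mem_map.mp hw with ⟨L, hL, rfl⟩
  obtain ⟨p, L', rfl, hp⟩ := qmul_shape _ _ _ _ L hL
  have hall : ∀ q ∈ (p :: L'), q.2.natDegree ≤ q.1 :=
    qmul_forall (fun q => q.2.natDegree ≤ q.1) hPmul Lx Ly hdegLx hdegLy _ hL
  refine Submodule.subset_span (Or.inr ⟨L'.length,
    (fun i => (((p :: L').get i).1)), (fun i => (((p :: L').get i).2)), ?_, ?_, ?_, ?_⟩)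
  · show 1 ≤ p.1
    rcases hp with rfl | rfl | rfl
    · exact hs1
    · exact hs1'
    · show 1 ≤ s 0 + s' 0
      omega
  · show p.2.coeff 0 = 0
    rcases hp with rfl | rfl | rfl
    · exact hR0
    · exact hR0'
    · show ((R 0) * (R' 0)).coeff 0 = 0
      rw [Polynomial.mul_coeff_zero, hR0, zero_mul]
  · intro j
    exact hall _ (List.get_mem _ _)
  · exact zqL_eq_zqGen _


/-- `Z_q` is closed under the multiplication of `ℚ⟦q⟧`. -/
theorem Zq_mul_closed : ∀ x y : PowerSeries ℚ, x ∈ Zq → y ∈ Zq → x * y ∈ Zq := by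
  intro x y hx hy
  rw [Zq_eq_span] at hx hy
  induction hx using Submodule.span_induction with
  | mem f hf =>
      induction hy using Submodule.span_induction with
      | mem g hg => exact key_mul f hf g hg
      | zero => rw [mul_zero]; exact Submodule.zero_mem _
      | add a b _ _ ha hb => rw [mul_add]; exact Submodule.add_mem _ ha hb
      | smul c a _ ha => rw [Algebra.mul_smul_comm]; exact Submodule.smul_mem _ c ha
  | zero => rw [zero_mul]; exact Submodule.zero_mem _
  | add a b _ _ ha hb => rw [add_mul]; exact Submodule.add_mem _ ha hb
  | smul c a _ ha => rw [Algebra.smul_mul_assoc]; exact Submodule.smul_mem _ c ha
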